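/- Assume σ is a d-dimensional simplicial cone, i.e. n = d and v_1, …, v_d are linearly independent. Let A, B ⊆ σ^∨ ∩ ℤ^d be finite nonempty sets such that σ^∨ \ Q(B) is bounded, and let ∂Q(B) denote the topological boundary of Q(B) in the subspace topology of σ^∨. Then sup_{u ∈ σ^∨ \ Q(B)} λ_A(u) = sup_{u ∈ ∂Q(B)} λ_A(u). -/

import Mathlib

open Finset Filter Pointwise

noncomputable section

namespace Paper

variable {d n : ℕ}

/-- The standard inner product pairing on `ℝ^d`. -/
def pair (u w : Fin d → ℝ) : ℝ := ∑ i, u i * w i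

/-- The coercion `ℤ^d → ℝ^d`. -/
def toR (u : Fin d → ℤ) : Fin d → ℝ := fun i => (u i : ℝ)

/-- The cone generated by the integer vectors `v 1, …, v n`. -/
def cone (v : Fin n → Fin d → ℤ) : Set (Fin d → ℝ) :=
  {x | ∃ c : Fin n → ℝ, (∀ j, 0 ≤ c j) ∧ x = ∑ j, c j • toR (v j)}

/-- The dual cone `σ^∨ = {u | ⟨u, x⟩ ≥ 0 for all x ∈ σ}`. -/
def dualCone (v : Fin n → Fin d → ℤ) : Set (Fin d → ℝ) :=
  {u | ∀ x ∈ cone v, 0 ≤ pair u x}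

/-- Strong convexity of the cone generated by `v`. -/
def StronglyConvex (v : Fin n → Fin d → ℤ) : Prop :=
  ∀ x ∈ cone v, -x ∈ cone v → x = 0

/-- An integer vector is primitive if the gcd of its coordinates is 1. -/
def IsPrimitive (w : Fin d → ℤ) : Prop := Finset.univ.gcd w = 1

/-- The cone generated by `v` is `d`-dimensional. -/
def FullDim (v : Fin n → Fin d → ℤ) : Prop :=
  Submodule.span ℝ (Set.range fun j => toR (v j)) = ⊤

/-- The Newton polyhedron `P(A) = conv(A) + σ^∨`. -/
def newton (v : Fin n → Fin d → ℤ) (A : Finset (Fin d → ℤ)) : Set (Fin d → ℝ) :=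
  convexHull ℝ (toR '' ↑A) + dualCone v

/-- The set `Q(A) = ⋃_{a ∈ A} (a + σ^∨)`. -/
def QSet (v : Fin n → Fin d → ℤ) (A : Finset (Fin d → ℤ)) : Set (Fin d → ℝ) :=
  ⋃ a ∈ A, (toR a +ᵥ dualCone v)

/-- `λ_A(u) = sup {λ > 0 | u ∈ λ·P(A)}` (and `0` if no such `λ` exists;
note `Real.sSup` of the empty set is `0`). -/
def lam (v : Fin n → Fin d → ℤ) (A : Finset (Fin d → ℤ)) (u : Fin d → ℝ) : ℝ :=
  sSup {l : ℝ | 0 < l ∧ u ∈ l • newton v A}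

/-- `Q(m)` for the maximal monomial ideal, whose exponent set is
`(σ^∨ ∩ ℤ^d) \ {0}`. -/
def Qm (v : Fin n → Fin d → ℤ) : Set (Fin d → ℝ) :=
  ⋃ a ∈ {a : Fin d → ℤ | toR a ∈ dualCone v ∧ a ≠ 0}, (toR a +ᵥ dualCone v)

/-- The set `O = {u ∈ σ^∨ | ⟨u, v_j⟩ ≥ 1 for some j}`. -/
def OSet (v : Fin n → Fin d → ℤ) : Set (Fin d → ℝ) :=
  {u ∈ dualCone v | ∃ j, 1 ≤ pair u (toR (v j))}


/-- The topological boundary of `s` inside `X`, with respect to the subspace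
topology on `X`. -/
def boundaryIn (X s : Set (Fin d → ℝ)) : Set (Fin d → ℝ) :=
  X ∩ closure s ∩ closure (X \ s)

lemma pair_add_left (u w x : Fin d → ℝ) : pair (u + w) x = pair u x + pair w x := by
  simp [pair, add_mul, Finset.sum_add_distrib]
lemma pair_sub_left (u w x : Fin d → ℝ) : pair (u - w) x = pair u x - pair w x := by
  simp [pair, sub_mul, Finset.sum_sub_distrib]
lemma pair_smul_left (c : ℝ) (u x : Fin d → ℝ) : pair (c • u) x = c * pair u x := by
  simp [pair, Finset.mul_sum, mul_assoc]
lemma pair_sum_left {ι : Type*} (s : Finset ι) (f : ι → Fin d → ℝ) (x : Fin d → ℝ) :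
    pair (∑ i ∈ s, f i) x = ∑ i ∈ s, pair (f i) x := by
  simp only [pair, Finset.sum_apply]
  rw [Finset.sum_comm]
  congr 1; ext i
  rw [Finset.sum_mul]
lemma continuous_pair (x : Fin d → ℝ) : Continuous fun u => pair u x :=
  continuous_finset_sum _ fun i _ => (continuous_apply i).mul continuous_const
lemma eq_zero_of_pair_self (u : Fin d → ℝ) (h : pair u u = 0) : u = 0 := by
  funext i
  have h2 := (Finset.sum_eq_zero_iff_of_nonneg (fun i _ => mul_self_nonneg (u i))).mp h
  exact mul_self_eq_zero.mp (h2 i (Finset.mem_univ i))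

lemma mem_cone_self (v : Fin n → Fin d → ℤ) (j : Fin n) : toR (v j) ∈ cone v := by
  refine ⟨fun j' => if j' = j then 1 else 0, fun j' => by positivity, ?_⟩
  rw [Finset.sum_eq_single j] <;> simp +contextual

lemma mem_dualCone_iff (v : Fin n → Fin d → ℤ) (u : Fin d → ℝ) :
    u ∈ dualCone v ↔ ∀ j, 0 ≤ pair u (toR (v j)) := by
  constructor
  · intro h j; exact h _ (mem_cone_self v j)
  · rintro h x ⟨c, hc, rfl⟩
    have h2 : pair u (∑ j, c j • toR (v j)) = ∑ j, c j * pair u (toR (v j)) := by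
      simp [pair, Finset.mul_sum]
      rw [Finset.sum_comm]
      congr 1; ext i; congr 1; ext j; ring
    rw [h2]
    exact Finset.sum_nonneg fun j _ => mul_nonneg (hc j) (h j)

lemma dualCone_add {v : Fin n → Fin d → ℤ} {u w : Fin d → ℝ}
    (hu : u ∈ dualCone v) (hw : w ∈ dualCone v) : u + w ∈ dualCone v := by
  rw [mem_dualCone_iff] at *
  intro j; rw [pair_add_left]
  exact add_nonneg (hu j) (hw j)

lemma dualCone_smul {v : Fin n → Fin d → ℤ} {u : Fin d → ℝ} {c : ℝ}
    (hc : 0 ≤ c) (hu : u ∈ dualCone v) : c • u ∈ dualCone v := by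
  rw [mem_dualCone_iff] at *
  intro j; rw [pair_smul_left]
  exact mul_nonneg hc (hu j)

lemma dualCone_zero (v : Fin n → Fin d → ℤ) : (0 : Fin d → ℝ) ∈ dualCone v := by
  rw [mem_dualCone_iff]; intro j; simp [pair]

lemma dualCone_convex (v : Fin n → Fin d → ℤ) : Convex ℝ (dualCone v) := by
  intro x hx y hy a b ha hb _
  exact dualCone_add (dualCone_smul ha hx) (dualCone_smul hb hy)

lemma isClosed_dualCone (v : Fin n → Fin d → ℤ) : IsClosed (dualCone v) := by
  have : dualCone v = ⋂ j, {u : Fin d → ℝ | 0 ≤ pair u (toR (v j))} := by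
    ext u; simp [mem_dualCone_iff]
  rw [this]
  exact isClosed_iInter fun j => isClosed_le continuous_const (continuous_pair _)

lemma isClosed_QSet (v : Fin n → Fin d → ℤ) (B : Finset (Fin d → ℤ)) :
    IsClosed (QSet v B) := by
  apply Set.Finite.isClosed_biUnion (B.finite_toSet)
  intro b _
  rw [← Set.image_vadd]
  exact (Homeomorph.addLeft (toR b)).isClosedMap _ (isClosed_dualCone v)

lemma QSet_add_dualCone {v : Fin n → Fin d → ℤ} {B : Finset (Fin d → ℤ)}
    {u w : Fin d → ℝ} (hu : u ∈ QSet v B) (hw : w ∈ dualCone v) : u + w ∈ QSet v B := by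
  simp only [QSet, Set.mem_iUnion, Set.mem_vadd_set] at *
  obtain ⟨b, hb, y, hy, rfl⟩ := hu
  exact ⟨b, hb, y + w, dualCone_add hy hw, by simp [vadd_eq_add]; abel⟩

lemma eq_zero_of_pair_vanish (hd : 1 ≤ d) {v : Fin d → Fin d → ℤ}
    (hli : LinearIndependent ℝ fun j => toR (v j)) (u : Fin d → ℝ)
    (h : ∀ j, pair u (toR (v j)) = 0) : u = 0 := by
  have : Nonempty (Fin d) := ⟨⟨0, hd⟩⟩
  have hspan : Submodule.span ℝ (Set.range fun j => toR (v j)) = ⊤ :=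
    hli.span_eq_top_of_card_eq_finrank (by simp)
  have hsub : ∀ x ∈ Submodule.span ℝ (Set.range fun j => toR (v j)), pair u x = 0 := by
    intro x hx
    induction hx using Submodule.span_induction with
    | mem x hx => obtain ⟨j, rfl⟩ := hx; exact h j
    | zero => simp [pair]
    | add x y _ _ hx hy =>
        have h3 : pair u (x + y) = pair u x + pair u y := by
          simp [pair, mul_add, Finset.sum_add_distrib]
        rw [h3, hx, hy, add_zero]
    | smul c x _ hx =>
        have h3 : pair u (c • x) = c * pair u x := by
          simp [pair, Finset.mul_sum]; congr 1; ext i; ring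
        rw [h3, hx, mul_zero]
  exact eq_zero_of_pair_self u (hsub u (by rw [hspan]; trivial))

lemma pair_map_surjective (hd : 1 ≤ d) {v : Fin d → Fin d → ℤ}
    (hli : LinearIndependent ℝ fun j => toR (v j)) :
    Function.Surjective (fun u (j : Fin d) => pair u (toR (v j))) := by
  have : Nonempty (Fin d) := ⟨⟨0, hd⟩⟩
  set Φ : (Fin d → ℝ) →ₗ[ℝ] (Fin d → ℝ) :=
    { toFun := fun u j => pair u (toR (v j))
      map_add' := by intro u w; funext j; exact pair_add_left u w _
      map_smul' := by intro c u; funext j; exact pair_smul_left c u _ } with hΦ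
  have hinj : Function.Injective Φ := by
    rw [← LinearMap.ker_eq_bot, Submodule.eq_bot_iff]
    intro u hu
    exact eq_zero_of_pair_vanish hd hli u fun j => congrFun hu j
  exact fun y => (LinearMap.injective_iff_surjective.mp hinj) y

lemma mem_smul_newton_iff {v : Fin n → Fin d → ℤ} {A : Finset (Fin d → ℤ)}
    {l : ℝ} (hl : 0 < l) (u : Fin d → ℝ) :
    u ∈ l • newton v A ↔
      ∃ c' ∈ convexHull ℝ (toR '' (↑A : Set (Fin d → ℤ))), ∃ w ∈ dualCone v, u = l • c' + w := by
  rw [Set.mem_smul_set]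
  constructor
  · rintro ⟨x, hx, rfl⟩
    obtain ⟨c', hc', w, hw, rfl⟩ := Set.mem_add.mp hx
    exact ⟨c', hc', l • w, dualCone_smul hl.le hw, by rw [smul_add]⟩
  · rintro ⟨c', hc', w, hw, rfl⟩
    refine ⟨c' + l⁻¹ • w, Set.mem_add.mpr ⟨c', hc', l⁻¹ • w, dualCone_smul (by positivity) hw, rfl⟩, ?_⟩
    rw [smul_add, smul_inv_smul₀ hl.ne']

def psi (v : Fin n → Fin d → ℤ) (u : Fin d → ℝ) : ℝ := ∑ j, pair u (toR (v j))

lemma psi_add (v : Fin n → Fin d → ℤ) (u w : Fin d → ℝ) :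
    psi v (u + w) = psi v u + psi v w := by
  simp [psi, pair_add_left, Finset.sum_add_distrib]
lemma psi_smul (v : Fin n → Fin d → ℤ) (c : ℝ) (u : Fin d → ℝ) :
    psi v (c • u) = c * psi v u := by
  simp [psi, pair_smul_left, Finset.mul_sum]
lemma psi_nonneg {v : Fin n → Fin d → ℤ} {u : Fin d → ℝ} (hu : u ∈ dualCone v) :
    0 ≤ psi v u :=
  Finset.sum_nonneg fun j _ => (mem_dualCone_iff v u).mp hu j

lemma pair_toR_int (a b : Fin d → ℤ) :
    pair (toR a) (toR b) = ((∑ i, a i * b i : ℤ) : ℝ) := by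
  simp [pair, toR]

lemma pair_toR_dichotomy {a b : Fin d → ℤ} (h : 0 ≤ pair (toR a) (toR b)) :
    pair (toR a) (toR b) = 0 ∨ 1 ≤ pair (toR a) (toR b) := by
  rw [pair_toR_int] at *
  have h1 : (0:ℤ) ≤ ∑ i, a i * b i := by exact_mod_cast h
  rcases h1.eq_or_lt with h2 | h2
  · left; exact_mod_cast h2.symm
  · right; exact_mod_cast h2


lemma lam_nonneg (v : Fin n → Fin d → ℤ) (A : Finset (Fin d → ℤ)) (u : Fin d → ℝ) :
    0 ≤ lam v A u :=
  Real.sSup_nonneg fun _ hx => hx.1.le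

section Main
variable {v : Fin n → Fin d → ℤ} {A : Finset (Fin d → ℤ)}

lemma hull_subset_dualCone (hAl : ∀ a ∈ A, toR a ∈ dualCone v) :
    convexHull ℝ (toR '' (↑A : Set (Fin d → ℤ))) ⊆ dualCone v :=
  convexHull_min (by rintro x ⟨a, ha, rfl⟩; exact hAl a ha) (dualCone_convex v)

lemma one_le_psi_hull (h1 : ∀ a ∈ A, 1 ≤ psi v (toR a)) :
    ∀ c' ∈ convexHull ℝ (toR '' (↑A : Set (Fin d → ℤ))), 1 ≤ psi v c' := by
  have hconv : Convex ℝ {x : Fin d → ℝ | 1 ≤ psi v x} :=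
    convex_halfSpace_ge ⟨psi_add v, fun c u => by rw [psi_smul]; rfl⟩ 1
  exact fun c' hc' =>
    convexHull_min (by rintro x ⟨a, ha, rfl⟩; exact h1 a ha) hconv hc'

lemma le_psi_of_mem (h1 : ∀ c' ∈ convexHull ℝ (toR '' (↑A : Set (Fin d → ℤ))), 1 ≤ psi v c')
    {l : ℝ} {u : Fin d → ℝ} (hl : 0 < l ∧ u ∈ l • newton v A) : l ≤ psi v u := by
  obtain ⟨c', hc', w, hw, rfl⟩ := (mem_smul_newton_iff hl.1 u).mp hl.2
  have h2 : psi v (l • c' + w) = l * psi v c' + psi v w := by rw [psi_add, psi_smul]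
  nlinarith [psi_nonneg hw, hl.1, h1 c' hc']

lemma bddAbove_lamSet (h1 : ∀ c' ∈ convexHull ℝ (toR '' (↑A : Set (Fin d → ℤ))), 1 ≤ psi v c')
    (u : Fin d → ℝ) : BddAbove {l : ℝ | 0 < l ∧ u ∈ l • newton v A} :=
  ⟨psi v u, fun _ hl => le_psi_of_mem h1 hl⟩

lemma lam_le_max (h1 : ∀ c' ∈ convexHull ℝ (toR '' (↑A : Set (Fin d → ℤ))), 1 ≤ psi v c')
    (u : Fin d → ℝ) : lam v A u ≤ max 0 (psi v u) :=
  Real.sSup_le (fun _ hl => (le_psi_of_mem h1 hl).trans (le_max_right _ _)) (le_max_left _ _)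

lemma psi_le_norm (v : Fin n → Fin d → ℤ) (u : Fin d → ℝ) :
    psi v u ≤ (∑ j, ∑ i, |(v j i : ℝ)|) * ‖u‖ := by
  have h : ∀ j, pair u (toR (v j)) ≤ (∑ i, |(v j i : ℝ)|) * ‖u‖ := by
    intro j
    rw [Finset.sum_mul]
    apply Finset.sum_le_sum
    intro i _
    calc u i * toR (v j) i ≤ |u i * toR (v j) i| := le_abs_self _
    _ = |u i| * |(v j i : ℝ)| := by rw [abs_mul]; rfl
    _ ≤ ‖u‖ * |(v j i : ℝ)| := by
        apply mul_le_mul_of_nonneg_right _ (abs_nonneg _)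
        exact norm_le_pi_norm u i
    _ = |(v j i : ℝ)| * ‖u‖ := mul_comm _ _
  calc psi v u ≤ ∑ j, (∑ i, |(v j i : ℝ)|) * ‖u‖ := Finset.sum_le_sum fun j _ => h j
  _ = (∑ j, ∑ i, |(v j i : ℝ)|) * ‖u‖ := by rw [Finset.sum_mul]

lemma bddAbove_lam_image
    (h1 : ∀ c' ∈ convexHull ℝ (toR '' (↑A : Set (Fin d → ℤ))), 1 ≤ psi v c')
    {T : Set (Fin d → ℝ)} (hT : Bornology.IsBounded T) :
    BddAbove (lam v A '' T) := by
  obtain ⟨C, hC⟩ := hT.exists_norm_le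
  refine ⟨max 0 ((∑ j, ∑ i, |(v j i : ℝ)|) * C), ?_⟩
  rintro x ⟨u, hu, rfl⟩
  refine (lam_le_max h1 u).trans (max_le_max le_rfl ?_)
  refine (psi_le_norm v u).trans ?_
  exact mul_le_mul_of_nonneg_left (hC u hu)
    (Finset.sum_nonneg fun j _ => Finset.sum_nonneg fun i _ => abs_nonneg _)


lemma pair_combo {ι : Type*} (s : Finset ι) (t : ι → ℝ) (f : ι → Fin d → ℝ) (x : Fin d → ℝ) :
    pair (∑ y ∈ s, t y • f y) x = ∑ y ∈ s, t y * pair (f y) x := by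
  rw [pair_sum_left]
  exact Finset.sum_congr rfl fun y _ => pair_smul_left _ _ _

lemma key_lemma (hAl : ∀ a ∈ A, toR a ∈ dualCone v)
    {p : Fin d → ℝ} {c l : ℝ} (hc : 0 < c) (hcl : c < l)
    (hp : p ∈ l • newton v A) :
    ∃ ε > 0, ∃ c' ∈ convexHull ℝ (toR '' (↑A : Set (Fin d → ℤ))),
      ∀ j, pair c' (toR (v j)) = 0 ∨
        c * pair c' (toR (v j)) + ε ≤ pair p (toR (v j)) := by
  have hl : 0 < l := hc.trans hcl
  obtain ⟨c₀, hc₀, w, hw, rfl⟩ := (mem_smul_newton_iff hl _).mp hp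
  set F : Finset (Fin d → ℝ) := A.image toR with hF
  have hFA : (toR '' (↑A : Set (Fin d → ℤ))) = (↑F : Set (Fin d → ℝ)) := by
    rw [hF, Finset.coe_image]
  rw [hFA] at hc₀
  rw [Finset.convexHull_eq] at hc₀
  obtain ⟨t, ht0, ht1, hcm⟩ := hc₀
  have hcm' : F.centerMass t id = ∑ y ∈ F, t y • y := by
    rw [Finset.centerMass_eq_of_sum_1 _ _ ht1]; rfl
  rw [hcm'] at hcm
  -- nonnegativity and dichotomy for elements of F
  have hF0 : ∀ y ∈ F, ∀ j, 0 ≤ pair y (toR (v j)) := by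
    intro y hy j
    obtain ⟨a, ha, rfl⟩ := Finset.mem_image.mp hy
    exact (mem_dualCone_iff v _).mp (hAl a ha) j
  have hFdi : ∀ y ∈ F, ∀ j, pair y (toR (v j)) = 0 ∨ 1 ≤ pair y (toR (v j)) := by
    intro y hy j
    obtain ⟨a, ha, rfl⟩ := Finset.mem_image.mp hy
    exact pair_toR_dichotomy ((mem_dualCone_iff v _).mp (hAl a ha) j)
  -- the small parameter
  set δ : ℝ := (l - c) / ((2 * l) * (n + 1)) with hδdef
  have hδ : 0 < δ := by
    apply div_pos (by linarith)
    positivity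
  set J : Finset (Fin n) := Finset.univ.filter (fun j => pair c₀ (toR (v j)) ≤ δ) with hJ
  set good : Finset (Fin d → ℝ) :=
    F.filter (fun y => ∀ j ∈ J, pair y (toR (v j)) = 0) with hgood
  have hgoodF : good ⊆ F := Finset.filter_subset _ _
  set τ : ℝ := ∑ y ∈ F \ good, t y with hτdef
  -- τ ≤ n * δ
  have hτ : τ ≤ (l - c) / (2 * l) := by
    have h1 : ∀ y ∈ F \ good, t y ≤ ∑ j ∈ J, t y * pair y (toR (v j)) := by
      intro y hy
      obtain ⟨hyF, hyng⟩ := Finset.mem_sdiff.mp hy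
      have : ∃ j ∈ J, ¬ pair y (toR (v j)) = 0 := by
        by_contra hcon
        push_neg at hcon
        exact hyng (Finset.mem_filter.mpr ⟨hyF, hcon⟩)
      obtain ⟨j0, hj0J, hj0⟩ := this
      have h2 : 1 ≤ pair y (toR (v j0)) := (hFdi y hyF j0).resolve_left hj0
      calc t y ≤ t y * pair y (toR (v j0)) := by
            nlinarith [ht0 y hyF]
      _ ≤ ∑ j ∈ J, t y * pair y (toR (v j)) := by
            apply Finset.single_le_sum (f := fun j => t y * pair y (toR (v j))) _ hj0J
            intro j _
            exact mul_nonneg (ht0 y hyF) (hF0 y hyF j)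
    have h2 : τ ≤ ∑ y ∈ F \ good, ∑ j ∈ J, t y * pair y (toR (v j)) :=
      Finset.sum_le_sum h1
    have h3 : ∑ y ∈ F \ good, ∑ j ∈ J, t y * pair y (toR (v j)) ≤
        ∑ y ∈ F, ∑ j ∈ J, t y * pair y (toR (v j)) := by
      apply Finset.sum_le_sum_of_subset_of_nonneg (Finset.sdiff_subset)
      intro y hy _
      exact Finset.sum_nonneg fun j _ => mul_nonneg (ht0 y hy) (hF0 y hy j)
    have h4 : ∑ y ∈ F, ∑ j ∈ J, t y * pair y (toR (v j)) =
        ∑ j ∈ J, pair c₀ (toR (v j)) := by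
      rw [Finset.sum_comm]
      refine Finset.sum_congr rfl fun j _ => ?_
      rw [← hcm, pair_combo]
    have h5 : ∑ j ∈ J, pair c₀ (toR (v j)) ≤ ∑ j ∈ J, δ :=
      Finset.sum_le_sum fun j hj => (Finset.mem_filter.mp hj).2
    have h6 : (J.card : ℝ) ≤ n := by
      have := Finset.card_le_card (Finset.subset_univ J)
      simp only [Finset.card_univ, Fintype.card_fin] at this
      exact_mod_cast this
    have h7 : ∑ j ∈ J, δ = (J.card : ℝ) * δ := by
      rw [Finset.sum_const, nsmul_eq_mul]
    have h8 : (J.card : ℝ) * δ ≤ (n : ℝ) * δ :=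
      mul_le_mul_of_nonneg_right h6 hδ.le
    have h9 : (n : ℝ) * δ ≤ (l - c) / (2 * l) := by
      rw [hδdef, ← mul_div_assoc]
      rw [div_le_div_iff₀ (by positivity) (by positivity)]
      have hn0 : (0:ℝ) ≤ n := Nat.cast_nonneg n
      nlinarith
    linarith
  have hm1 : ∑ y ∈ good, t y = 1 - τ := by
    have := Finset.sum_sdiff hgoodF (f := t)
    rw [ht1] at this
    linarith [this]
  set m : ℝ := ∑ y ∈ good, t y with hm
  have hmge : (l + c) / (2 * l) ≤ m := by
    rw [hm1]
    have : (l - c) / (2*l) + (l+c)/(2*l) = 1 := by field_simp; ring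
    linarith
  have hm0 : 0 < m := lt_of_lt_of_le (by positivity) hmge
  have hlc : 0 < l + c := by linarith
  have hminv : m⁻¹ ≤ 2 * l / (l + c) := by
    have h1 : ((l + c) / (2 * l))⁻¹ = 2 * l / (l + c) := by
      rw [inv_div]
    rw [← h1]
    exact inv_anti₀ (div_pos hlc (by positivity)) hmge
  set c' : Fin d → ℝ := m⁻¹ • ∑ y ∈ good, t y • y with hc'
  have hc'mem : c' ∈ convexHull ℝ (toR '' (↑A : Set (Fin d → ℤ))) := by
    rw [hFA]
    have := Finset.centerMass_mem_convexHull good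
      (fun y hy => ht0 y (hgoodF hy)) (by rw [← hm]; exact hm0)
      (fun y hy => Finset.mem_coe.mpr (hgoodF hy))
    have heq : (good.centerMass t fun y => y) = c' := by
      rw [Finset.centerMass, hc', hm]
    rwa [heq] at this
  have hpairc' : ∀ j, pair c' (toR (v j)) =
      m⁻¹ * ∑ y ∈ good, t y * pair y (toR (v j)) := by
    intro j
    rw [hc', pair_smul_left, pair_combo]
  have hεpos : 0 < δ * (l * (l - c) / (l + c)) :=
    mul_pos hδ (div_pos (mul_pos hl (by linarith)) hlc)
  refine ⟨δ * (l * (l - c) / (l + c)), hεpos, c', hc'mem, ?_⟩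
  intro j
  by_cases hj : pair c₀ (toR (v j)) ≤ δ
  · left
    have hjJ : j ∈ J := Finset.mem_filter.mpr ⟨Finset.mem_univ j, hj⟩
    rw [hpairc']
    have : ∑ y ∈ good, t y * pair y (toR (v j)) = 0 := by
      apply Finset.sum_eq_zero
      intro y hy
      rw [(Finset.mem_filter.mp hy).2 j hjJ, mul_zero]
    rw [this, mul_zero]
  · right
    push_neg at hj
    set X : ℝ := pair c₀ (toR (v j)) with hX
    have hXpos : 0 < X := hδ.trans hj
    have hptotal : pair (l • c₀ + w) (toR (v j)) = l * X + pair w (toR (v j)) := by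
      rw [pair_add_left, pair_smul_left]
    have hwj : 0 ≤ pair w (toR (v j)) := (mem_dualCone_iff v w).mp hw j
    have hsumle : ∑ y ∈ good, t y * pair y (toR (v j)) ≤ X := by
      rw [hX, ← hcm, pair_combo]
      apply Finset.sum_le_sum_of_subset_of_nonneg hgoodF
      intro y hy _
      exact mul_nonneg (ht0 y hy) (hF0 y hy j)
    have hc'le : pair c' (toR (v j)) ≤ m⁻¹ * X := by
      rw [hpairc']
      exact mul_le_mul_of_nonneg_left hsumle (inv_nonneg.mpr hm0.le)
    have hc'X : c * pair c' (toR (v j)) ≤ (2 * l / (l + c)) * (c * X) := by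
      calc c * pair c' (toR (v j)) ≤ c * (m⁻¹ * X) :=
            mul_le_mul_of_nonneg_left hc'le hc.le
      _ ≤ (2 * l / (l + c)) * (c * X) := by
            have := mul_le_mul_of_nonneg_right hminv (mul_nonneg hc.le hXpos.le)
            calc c * (m⁻¹ * X) = m⁻¹ * (c * X) := by ring
            _ ≤ (2 * l / (l + c)) * (c * X) := this
    have hεle : δ * (l * (l - c) / (l + c)) ≤ X * (l * (l - c) / (l + c)) := by
      apply mul_le_mul_of_nonneg_right hj.le
      exact (div_pos (mul_pos hl (by linarith)) hlc).le
    have hkey : (2 * l / (l + c)) * (c * X) + X * (l * (l - c) / (l + c)) = l * X := by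
      field_simp
      ring
    rw [hptotal]
    linarith

lemma lam_zero_of_zero_mem (h0 : (0 : Fin d → ℤ) ∈ A) {u : Fin d → ℝ}
    (hu : u ∈ dualCone v) : lam v A u = 0 := by
  have hset : {l : ℝ | 0 < l ∧ u ∈ l • newton v A} = Set.Ioi 0 := by
    ext l
    constructor
    · exact fun h => h.1
    · intro hl
      refine ⟨hl, (mem_smul_newton_iff hl u).mpr ⟨0, ?_, u, hu, by simp⟩⟩
      exact subset_convexHull ℝ _ ⟨0, h0, by funext i; simp [toR]⟩
  rw [lam, hset]
  exact Real.sSup_of_not_bddAbove (not_bddAbove_Ioi (a := (0:ℝ)))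
end Main


/-- the supremum of `λ_A` over `σ^∨ \ Q(B)` equals its supremum
over the boundary `∂Q(B)` of `Q(B)` in the subspace topology of `σ^∨`. -/
theorem sup_lam_eq_sup_boundary
    (d : ℕ) (hd : 1 ≤ d)
    (v : Fin d → Fin d → ℤ)
    (hsc : StronglyConvex v) (hprim : ∀ j, IsPrimitive (v j))
    (hli : LinearIndependent ℝ fun j => toR (v j))
    (A B : Finset (Fin d → ℤ)) (hAne : A.Nonempty) (hBne : B.Nonempty)
    (hAl : ∀ a ∈ A, toR a ∈ dualCone v) (hBl : ∀ b ∈ B, toR b ∈ dualCone v)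
    (hbdd : Bornology.IsBounded (dualCone v \ QSet v B)) :
    sSup (lam v A '' (dualCone v \ QSet v B)) =
      sSup (lam v A '' boundaryIn (dualCone v) (QSet v B)) := by
  by_cases h0 : (0 : Fin d → ℤ) ∈ A
  · have hz : ∀ (W : Set (Fin d → ℝ)), W ⊆ dualCone v → sSup (lam v A '' W) = 0 := by
      intro W hW
      apply le_antisymm
      · apply Real.sSup_le _ le_rfl
        rintro x ⟨u, hu, rfl⟩
        exact le_of_eq (lam_zero_of_zero_mem h0 (hW hu))
      · exact Real.sSup_nonneg fun x hx => by
          obtain ⟨u, _, rfl⟩ := hx; exact lam_nonneg v A u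
    rw [hz _ Set.diff_subset, hz _ (fun x hx => hx.1.1)]
  -- main case : 0 ∉ A
  have hAne0 : ∀ a ∈ A, 1 ≤ psi v (toR a) := by
    intro a ha
    have hDa := hAl a ha
    have hnz : ∃ j, pair (toR a) (toR (v j)) ≠ 0 := by
      by_contra hcon
      push_neg at hcon
      have hz : toR a = 0 := eq_zero_of_pair_vanish hd hli _ hcon
      apply h0
      have ha0 : a = 0 := by
        funext i
        have h2 := congrFun hz i
        simp only [toR, Pi.zero_apply] at h2 ⊢
        exact_mod_cast h2
      rwa [ha0] at ha
    obtain ⟨j0, hj0⟩ := hnz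
    have h1 : 1 ≤ pair (toR a) (toR (v j0)) :=
      (pair_toR_dichotomy ((mem_dualCone_iff v _).mp hDa j0)).resolve_left hj0
    calc (1:ℝ) ≤ pair (toR a) (toR (v j0)) := h1
    _ ≤ psi v (toR a) := Finset.single_le_sum (f := fun j => pair (toR a) (toR (v j)))
        (fun j _ => (mem_dualCone_iff v _).mp hDa j) (Finset.mem_univ j0)
  have h1 := one_le_psi_hull hAne0
  rcases Set.eq_empty_or_nonempty (dualCone v \ QSet v B) with hS | hSne
  · have hb : boundaryIn (dualCone v) (QSet v B) =
        dualCone v ∩ closure (QSet v B) ∩ closure (dualCone v \ QSet v B) := rfl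
    rw [hS, hb, hS]
    simp
  -- the interior direction e
  obtain ⟨e, he⟩ := pair_map_surjective hd hli (fun _ => 1)
  have he1 : ∀ j, pair e (toR (v j)) = 1 := fun j => congrFun he j
  have heD : e ∈ dualCone v := (mem_dualCone_iff v e).mpr fun j => by rw [he1]; norm_num
  have hene : e ≠ 0 := by
    intro h
    have h2 := he1 ⟨0, hd⟩
    rw [h] at h2
    simp [pair] at h2
  have hepos : 0 < ‖e‖ := norm_pos_iff.mpr hene
  obtain ⟨C, hC⟩ := hbdd.exists_norm_le
  -- main construction: pushing a point of the complement to the boundary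
  have hmain : ∀ u ∈ dualCone v \ QSet v B,
      ∃ p, p ∈ boundaryIn (dualCone v) (QSet v B) ∧ lam v A u ≤ lam v A p := by
    intro u hu
    set K : Set ℝ := {t : ℝ | 0 ≤ t ∧ u + t • e ∈ QSet v B} with hK
    have hKne : K.Nonempty := by
      set t0 : ℝ := (C + ‖u‖ + 1) / ‖e‖ with ht0def
      have hC0 : (0:ℝ) ≤ C := le_trans (norm_nonneg _) (hC _ hu)
      have ht0 : 0 ≤ t0 := div_nonneg (by positivity) hepos.le
      have hmem : u + t0 • e ∈ dualCone v := dualCone_add hu.1 (dualCone_smul ht0 heD)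
      by_cases hq : u + t0 • e ∈ QSet v B
      · exact ⟨t0, ht0, hq⟩
      · exfalso
        have hin : u + t0 • e ∈ dualCone v \ QSet v B := ⟨hmem, hq⟩
        have hn := hC _ hin
        have h3 : ‖t0 • e‖ ≤ ‖u + t0 • e‖ + ‖u‖ := by
          have h4 := norm_sub_le (u + t0 • e) u
          have h5 : (u + t0 • e) - u = t0 • e := by abel
          rw [h5] at h4
          exact h4
        rw [norm_smul, Real.norm_eq_abs, abs_of_nonneg ht0] at h3
        have h6 : t0 * ‖e‖ = C + ‖u‖ + 1 := div_mul_cancel₀ _ hepos.ne'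
        linarith
    have hKcl : IsClosed K := by
      have hKeq : K = {t : ℝ | 0 ≤ t} ∩ ((fun t => u + t • e) ⁻¹' QSet v B) := rfl
      rw [hKeq]
      exact (isClosed_le continuous_const continuous_id).inter
        ((isClosed_QSet v B).preimage (continuous_const.add (continuous_id.smul continuous_const)))
    have hKbdd : BddBelow K := ⟨0, fun t ht => ht.1⟩
    have htK : sInf K ∈ K := hKcl.csInf_mem hKne hKbdd
    set tstar := sInf K with htstar
    have ht0 : 0 ≤ tstar := htK.1
    have htpos : 0 < tstar := by
      rcases ht0.eq_or_lt with h | h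
      · exfalso
        apply hu.2
        have h2 := htK.2
        rw [← h] at h2
        simpa using h2
      · exact h
    have hpD : u + tstar • e ∈ dualCone v := dualCone_add hu.1 (dualCone_smul ht0 heD)
    have hpQ : u + tstar • e ∈ QSet v B := htK.2
    have hpcl : u + tstar • e ∈ closure (dualCone v \ QSet v B) := by
      rw [Metric.mem_closure_iff]
      intro ε hε
      set δ' := min (tstar/2) (ε / (2 * ‖e‖)) with hδ'
      have hδ'pos : 0 < δ' := lt_min (by linarith) (by positivity)
      have hδ'le : δ' ≤ tstar/2 := min_le_left _ _
      set t' := tstar - δ' with ht'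
      have ht'0 : 0 ≤ t' := by rw [ht']; linarith
      have ht'Q : u + t' • e ∉ QSet v B := by
        intro hcon
        have h2 : t' ∈ K := ⟨ht'0, hcon⟩
        have h3 := csInf_le hKbdd h2
        rw [← htstar] at h3
        rw [ht'] at h3
        linarith
      refine ⟨u + t' • e, ⟨dualCone_add hu.1 (dualCone_smul ht'0 heD), ht'Q⟩, ?_⟩
      rw [dist_eq_norm]
      have h4 : (u + tstar • e) - (u + t' • e) = δ' • e := by
        rw [ht', sub_smul]
        abel
      rw [h4, norm_smul, Real.norm_eq_abs, abs_of_nonneg hδ'pos.le]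
      have h5 : δ' ≤ ε / (2 * ‖e‖) := min_le_right _ _
      calc δ' * ‖e‖ ≤ ε / (2 * ‖e‖) * ‖e‖ := mul_le_mul_of_nonneg_right h5 hepos.le
      _ = ε / 2 := by field_simp
      _ < ε := by linarith
    refine ⟨u + tstar • e, ⟨⟨hpD, subset_closure hpQ⟩, hpcl⟩, ?_⟩
    apply Real.sSup_le _ (lam_nonneg v A _)
    intro l hl
    apply le_csSup (bddAbove_lamSet h1 _)
    obtain ⟨c', hc', w, hw, hrep⟩ := (mem_smul_newton_iff hl.1 u).mp hl.2
    refine ⟨hl.1, (mem_smul_newton_iff hl.1 _).mpr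
      ⟨c', hc', w + tstar • e, dualCone_add hw (dualCone_smul ht0 heD), ?_⟩⟩
    rw [hrep, add_assoc]
  have hTb : Bornology.IsBounded (boundaryIn (dualCone v) (QSet v B)) :=
    (hbdd.closure).subset (fun x hx => hx.2)
  have hTne : (boundaryIn (dualCone v) (QSet v B)).Nonempty := by
    obtain ⟨u, hu⟩ := hSne
    obtain ⟨p, hp, _⟩ := hmain u hu
    exact ⟨p, hp⟩
  have hRHS0 : 0 ≤ sSup (lam v A '' boundaryIn (dualCone v) (QSet v B)) := by
    obtain ⟨p, hp⟩ := hTne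
    exact le_trans (lam_nonneg v A p) (le_csSup (bddAbove_lam_image h1 hTb) ⟨p, hp, rfl⟩)
  have hLHS0 : 0 ≤ sSup (lam v A '' (dualCone v \ QSet v B)) := by
    obtain ⟨u, hu⟩ := hSne
    exact le_trans (lam_nonneg v A u) (le_csSup (bddAbove_lam_image h1 hbdd) ⟨u, hu, rfl⟩)
  apply le_antisymm
  · apply Real.sSup_le _ hRHS0
    rintro x ⟨u, hu, rfl⟩
    obtain ⟨p, hp, hle⟩ := hmain u hu
    exact hle.trans (le_csSup (bddAbove_lam_image h1 hTb) ⟨p, hp, rfl⟩)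
  · apply Real.sSup_le _ hLHS0
    rintro x ⟨p, hp, rfl⟩
    apply Real.sSup_le _ hLHS0
    intro l hl
    by_contra hcon
    push_neg at hcon
    set M := sSup (lam v A '' (dualCone v \ QSet v B)) with hM
    have hMl : M < l := hcon
    have hmax : max M 0 < l := max_lt hMl hl.1
    set c := (max M 0 + l) / 2 with hc
    have hM0 : (0:ℝ) ≤ max M 0 := le_max_right _ _
    have hcpos : 0 < c := by rw [hc]; linarith [hl.1]
    have hcl : c < l := by rw [hc]; linarith
    have hMc : max M 0 < c := by rw [hc]; linarith
    obtain ⟨ε, hε, c', hc'm, hdisj⟩ := key_lemma hAl hcpos hcl hl.2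
    have hopen : IsOpen {x : Fin d → ℝ | ∀ j, pair p (toR (v j)) - ε < pair x (toR (v j))} := by
      have heq : {x : Fin d → ℝ | ∀ j, pair p (toR (v j)) - ε < pair x (toR (v j))} =
          ⋂ j, (fun x => pair x (toR (v j))) ⁻¹' Set.Ioi (pair p (toR (v j)) - ε) := by
        ext x; simp [Set.mem_iInter]
      rw [heq]
      exact isOpen_iInter_of_finite fun j => (isOpen_Ioi).preimage (continuous_pair _)
    have hpU : p ∈ {x : Fin d → ℝ | ∀ j, pair p (toR (v j)) - ε < pair x (toR (v j))} :=
      fun j => by linarith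
    have hpclS := hp.2
    rw [_root_.mem_closure_iff] at hpclS
    obtain ⟨x, hxU, hxS⟩ := hpclS _ hopen hpU
    have hxc : x ∈ c • newton v A := by
      apply (mem_smul_newton_iff hcpos x).mpr
      refine ⟨c', hc'm, x - c • c', ?_, by abel⟩
      rw [mem_dualCone_iff]
      intro j
      rw [pair_sub_left, pair_smul_left]
      rcases hdisj j with h | h
      · rw [h]
        have := (mem_dualCone_iff v x).mp hxS.1 j
        linarith
      · have hx := hxU j
        linarith
    have hc_le : c ≤ lam v A x := le_csSup (bddAbove_lamSet h1 x) ⟨hcpos, hxc⟩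
    have hlam_le : lam v A x ≤ M := le_csSup (bddAbove_lam_image h1 hbdd) ⟨x, hxS, rfl⟩
    have : M < c := lt_of_le_of_lt (le_max_left M 0) hMc
    linarith


end Paper
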